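/- The half-twist has the explicit form σ_1σ_2σ_1 = ((−1)^{3/4} e^{iπα(3α+2)/4}/(1 − e^{iπα})) · [[1, −1+2cos(πα)], [−1, −1]], for the matrices σ_1, σ_2 defined above. -/

import Mathlib

open Matrix Complex

/-- `q^x = e^{iπx/2}` -/
noncomputable def qpow (x : ℂ) : ℂ := Complex.exp (Real.pi * Complex.I * x / 2)

/-- quantum integer `[x] = (q^x - q^{-x})/(q - q^{-1})` -/
noncomputable def qint (x : ℂ) : ℂ := (qpow x - qpow (-x)) / (qpow 1 - qpow (-1))

lemma qpow_add (x y : ℂ) : qpow (x + y) = qpow x * qpow y := by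
  unfold qpow
  rw [← Complex.exp_add]
  congr 1
  ring

lemma qpow_ne_zero (x : ℂ) : qpow x ≠ 0 := Complex.exp_ne_zero _

lemma qpow_neg (x : ℂ) : qpow (-x) = (qpow x)⁻¹ := by
  unfold qpow
  rw [← Complex.exp_neg]
  congr 1
  ring

lemma qpow_nat_mul (n : ℕ) (x : ℂ) : qpow (n * x) = qpow x ^ n := by
  unfold qpow
  rw [← Complex.exp_nat_mul]
  congr 1
  ring

lemma qpow_one : qpow 1 = Complex.I := by
  unfold qpow
  have h : (Real.pi : ℂ) * Complex.I * 1 / 2 = ((Real.pi : ℂ) / 2) * Complex.I := by ring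
  rw [h, Complex.exp_mul_I]
  simp

lemma I_pow_three : Complex.I ^ 3 = -Complex.I := by
  rw [pow_succ, Complex.I_sq]; ring

lemma I_pow_five : Complex.I ^ 5 = Complex.I := by
  rw [pow_succ, Complex.I_pow_four]; ring

lemma I_pow_six : Complex.I ^ 6 = -1 := by
  rw [pow_succ, I_pow_five, Complex.I_mul_I]

lemma I_pow_seven : Complex.I ^ 7 = -Complex.I := by
  rw [pow_succ, I_pow_six]; ring

lemma I_pow_eight : Complex.I ^ 8 = 1 := by
  rw [pow_succ, I_pow_seven]; simp [Complex.I_mul_I]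

set_option maxHeartbeats 2000000 in
/-- Explicit form of the half-twist `σ₁σ₂σ₁`, where `(-1)^{3/4} = e^{3iπ/4}`. -/
theorem half_twist_explicit (α : ℝ) (hα : Irrational α)
    (σ₁ A σ₂ : Matrix (Fin 2) (Fin 2) ℂ)
    (hσ₁ : σ₁ = !![qpow (((α : ℂ) + 1) ^ 2 / 2), 0; 0, qpow (((α : ℂ) - 1) ^ 2 / 2)])
    (hA : A = (qint (2 * (α : ℂ)))⁻¹ •
      !![-(qint ((α : ℂ) + 1)), qint (3 * (α : ℂ) + 3);
         qint ((α : ℂ) + 1), qint ((α : ℂ) + 1)])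
    (hσ₂ : σ₂ = A⁻¹ * σ₁ * A) :
    σ₁ * σ₂ * σ₁ =
      (Complex.exp (3 * Real.pi * Complex.I / 4) *
        Complex.exp (Real.pi * Complex.I * (α : ℂ) * (3 * (α : ℂ) + 2) / 4) /
        (1 - Complex.exp (Real.pi * Complex.I * (α : ℂ)))) •
      !![1, -1 + 2 * (Real.cos (Real.pi * α) : ℂ); -1, -1] := by
  set s : ℂ := qpow (α : ℂ) with hs_def
  set k : ℂ := qpow ((α : ℂ) ^ 2 / 2 + 1 / 2) with hk_def
  have hs0 : s ≠ 0 := qpow_ne_zero _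
  have hqm1 : qpow (-1 : ℂ) = -Complex.I := by
    rw [show (-1 : ℂ) = -(1 : ℂ) from rfl, qpow_neg, qpow_one, Complex.inv_I]
  have hπ : (Real.pi : ℂ) ≠ 0 := by exact_mod_cast Real.pi_ne_zero
  -- s^4 ≠ 1
  have hs4 : s ^ 4 - 1 ≠ 0 := by
    intro h
    have h1 : s ^ 4 = 1 := by linear_combination h
    have h2 : Complex.exp ((4 : ℕ) * ((Real.pi : ℂ) * Complex.I * (α : ℂ) / 2)) = 1 := by
      rw [Complex.exp_nat_mul]
      exact h1
    rw [Complex.exp_eq_one_iff] at h2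
    obtain ⟨n, hn⟩ := h2
    have h3 : (2 * (Real.pi : ℂ) * Complex.I) * (α : ℂ)
        = (2 * (Real.pi : ℂ) * Complex.I) * (n : ℂ) := by
      push_cast at hn ⊢
      linear_combination hn
    have h4 : (α : ℂ) = (n : ℂ) :=
      mul_left_cancel₀ (mul_ne_zero (mul_ne_zero two_ne_zero hπ) Complex.I_ne_zero) h3
    exact hα.ne_int n (by exact_mod_cast h4)
  have hs2 : s ^ 2 - 1 ≠ 0 := by
    intro h
    exact hs4 (by rw [show s ^ 4 - 1 = (s ^ 2 - 1) * (s ^ 2 + 1) from by ring, h, zero_mul])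
  have hs2' : s ^ 2 + 1 ≠ 0 := by
    intro h
    exact hs4 (by rw [show s ^ 4 - 1 = (s ^ 2 - 1) * (s ^ 2 + 1) from by ring, h, mul_zero])
  have h1ms2 : 1 - s ^ 2 ≠ 0 := by
    intro h; exact hs2 (by linear_combination -h)
  have hsinv : qpow (-(α : ℂ)) = s⁻¹ := qpow_neg _
  have hII : Complex.I - -Complex.I = 2 * Complex.I := by ring
  -- qint values
  have e1 : qint ((α : ℂ) + 1) = (s ^ 2 + 1) / (2 * s) := by
    unfold qint
    rw [qpow_add, show (-((α : ℂ) + 1)) = (-(α : ℂ)) + (-1) from by ring, qpow_add,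
      hsinv, qpow_one, hqm1, hII, ← hs_def]
    field_simp
    ring
  have e2 : qint (2 * (α : ℂ)) = (s ^ 4 - 1) / (2 * Complex.I * s ^ 2) := by
    unfold qint
    rw [show (2 * (α : ℂ)) = (α : ℂ) + (α : ℂ) from by ring, qpow_add,
      show (-((α : ℂ) + (α : ℂ))) = (-(α : ℂ)) + (-(α : ℂ)) from by ring, qpow_add,
      hsinv, qpow_one, hqm1, hII, ← hs_def]
    field_simp
  have e3 : qint (3 * (α : ℂ) + 3) = -((s ^ 6 + 1) / (2 * s ^ 3)) := by
    unfold qint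
    rw [show (3 * (α : ℂ) + 3) = ((3 : ℕ) : ℂ) * ((α : ℂ) + 1) from by push_cast; ring,
      qpow_nat_mul, qpow_add,
      show (-(((3 : ℕ) : ℂ) * ((α : ℂ) + 1))) = ((3 : ℕ) : ℂ) * ((-(α : ℂ)) + (-1)) from by
        push_cast; ring,
      qpow_nat_mul, qpow_add, hsinv, qpow_one, hqm1, hII, ← hs_def]
    field_simp
    ring_nf
    simp only [Complex.I_sq, _root_.I_pow_three, Complex.I_pow_four, I_pow_five, I_pow_six,
      I_pow_seven, I_pow_eight]
    ring
  -- exponential values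
  have hs2exp : Complex.exp ((Real.pi : ℂ) * Complex.I * (α : ℂ)) = s ^ 2 := by
    rw [hs_def]
    unfold qpow
    rw [sq, ← Complex.exp_add]
    congr 1
    ring
  have hcos : ((Real.cos (Real.pi * α) : ℝ) : ℂ) = (s ^ 2 + (s ^ 2)⁻¹) / 2 := by
    rw [Complex.ofReal_cos,
      show ((Real.pi * α : ℝ) : ℂ) = (Real.pi : ℂ) * (α : ℂ) from by push_cast; ring]
    have h2c := Complex.two_cos ((Real.pi : ℂ) * (α : ℂ))
    rw [show (Real.pi : ℂ) * (α : ℂ) * Complex.I = (Real.pi : ℂ) * Complex.I * (α : ℂ) from by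
        ring, hs2exp,
      show -((Real.pi : ℂ) * (α : ℂ)) * Complex.I = -((Real.pi : ℂ) * Complex.I * (α : ℂ)) from by
        ring, Complex.exp_neg, hs2exp] at h2c
    linear_combination h2c / 2
  have hsc1 : Complex.exp (3 * (Real.pi : ℂ) * Complex.I / 4) *
      Complex.exp ((Real.pi : ℂ) * Complex.I * (α : ℂ) * (3 * (α : ℂ) + 2) / 4) = k ^ 3 * s := by
    rw [hk_def, hs_def]
    unfold qpow
    rw [show (Complex.exp ((Real.pi : ℂ) * Complex.I * ((α : ℂ) ^ 2 / 2 + 1 / 2) / 2)) ^ 3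
        = Complex.exp ((3 : ℕ) * ((Real.pi : ℂ) * Complex.I * ((α : ℂ) ^ 2 / 2 + 1 / 2) / 2)) from
        (Complex.exp_nat_mul _ 3).symm, ← Complex.exp_add, ← Complex.exp_add]
    congr 1
    push_cast
    ring
  -- σ₁ entries
  have f1 : qpow (((α : ℂ) + 1) ^ 2 / 2) = k * s := by
    rw [hk_def, hs_def, ← qpow_add]
    congr 1
    ring
  have f2 : qpow (((α : ℂ) - 1) ^ 2 / 2) = k * s⁻¹ := by
    rw [hk_def, ← hsinv, ← qpow_add]
    congr 1
    ring
  clear_value s k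
  -- explicit polynomial forms
  set N : Matrix (Fin 2) (Fin 2) ℂ :=
    !![-(s ^ 2 * (s ^ 2 + 1)), -(s ^ 6 + 1);
       s ^ 2 * (s ^ 2 + 1), s ^ 2 * (s ^ 2 + 1)] with hN_def
  set D : Matrix (Fin 2) (Fin 2) ℂ := !![s ^ 2, 0; 0, 1] with hD_def
  have hA' : A = (Complex.I / (s * (s ^ 4 - 1))) • N := by
    rw [hA, e1, e2, e3, hN_def]
    ext i j
    fin_cases i <;> fin_cases j <;>
      · simp [Matrix.smul_apply, smul_eq_mul]
        try field_simp
        try ring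
  have hσ₁' : σ₁ = (k * s⁻¹) • D := by
    rw [hσ₁, f1, f2, hD_def]
    ext i j
    fin_cases i <;> fin_cases j <;>
      · simp [Matrix.smul_apply, smul_eq_mul]
        try field_simp
        try ring
  have hNN : N * N = (-(s ^ 2 * (s ^ 4 - 1) ^ 2)) • (1 : Matrix (Fin 2) (Fin 2) ℂ) := by
    rw [hN_def]
    ext i j
    fin_cases i <;> fin_cases j <;>
      · simp [Matrix.mul_apply, Fin.sum_univ_two, Matrix.smul_apply, smul_eq_mul,
          Matrix.one_apply]
        try ring
  have hcA2 : (Complex.I / (s * (s ^ 4 - 1))) * (Complex.I / (s * (s ^ 4 - 1)))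
      = -(1 / ((s * (s ^ 4 - 1)) ^ 2)) := by
    rw [div_mul_div_comm, Complex.I_mul_I]
    ring
  have hAA : A * A = 1 := by
    rw [hA', Matrix.smul_mul, Matrix.mul_smul, smul_smul, hNN, smul_smul, hcA2]
    rw [show -(1 / ((s * (s ^ 4 - 1)) ^ 2)) * -(s ^ 2 * (s ^ 4 - 1) ^ 2) = 1 from by
      field_simp, one_smul]
  have hAinv : A⁻¹ = A := Matrix.inv_eq_right_inv hAA
  have hp : s ^ 5 - s ^ 9 * 2 + s ^ 13 ≠ 0 := by
    rw [show s ^ 5 - s ^ 9 * 2 + s ^ 13 = s ^ 5 * (s ^ 4 - 1) ^ 2 from by ring]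
    exact mul_ne_zero (pow_ne_zero _ hs0) (pow_ne_zero _ hs4)
  rw [hσ₂, hAinv, hσ₁', hA', hsc1, hs2exp, hcos, hN_def, hD_def]
  simp only [Matrix.smul_mul, Matrix.mul_smul, smul_smul]
  ext i j
  fin_cases i <;> fin_cases j <;>
    · simp [Matrix.mul_apply, Fin.sum_univ_two, Matrix.smul_apply, smul_eq_mul]
      field_simp [hp]
      try rw [div_eq_iff (by apply_rules [mul_ne_zero, hs0, hs4, h1ms2, hs2, hs2'])]
      try ring_nf
      try simp only [Complex.I_sq, _root_.I_pow_three, Complex.I_pow_four, I_pow_five, I_pow_six,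
        I_pow_seven, I_pow_eight]
      try ring
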